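/- Let (Ω, P) be a probability space, {A_n} events with P(A_n) > 0 and ∑ P(A_n) = ∞, and α_n = (∑_{i=1}^n 1_{A_i}) / (∑_{i=1}^n P(A_i)). Then for every p > 1, P(limsup A_n) ≥ (limsup_{n→∞} E[α_n^p])^{1/(1−p)}. -/

import Mathlib

open MeasureTheory Filter Set Topology

theorem mori_szekely_bound_gt_one {Ω : Type*} [MeasurableSpace Ω] (μ : Measure Ω)
    [IsProbabilityMeasure μ] (A : ℕ → Set Ω) (hA : ∀ n, MeasurableSet (A n))
    (hpos : ∀ n, 0 < μ (A n))
    (hdiv : Tendsto (fun n => ∑ k ∈ Finset.range n, (μ (A k)).toReal) atTop atTop)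
    (p : ℝ) (hp : 1 < p) :
    (μ (Filter.limsup A atTop)).toReal ≥
      (Filter.limsup (fun n =>
          ∫ ω, ((∑ i ∈ Finset.range n, (A i).indicator (1 : Ω → ℝ) ω) /
              (∑ i ∈ Finset.range n, (μ (A i)).toReal)) ^ p ∂μ) atTop) ^ (1 / (1 - p)) := by
  set S : ℕ → ℝ := fun n => ∑ k ∈ Finset.range n, (μ (A k)).toReal with hSdef
  set F : ℕ → Ω → ℝ := fun n ω => ∑ i ∈ Finset.range n, (A i).indicator (1 : Ω → ℝ) ω with hFdef
  set f : ℕ → Ω → ℝ := fun n ω => F n ω / S n with hfdef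
  set g : ℕ → ℝ := fun n => ∫ ω, (f n ω) ^ p ∂μ with hgdef
  have hp0 : (0:ℝ) < p := lt_trans one_pos hp
  have h1p : 1 - p ≠ 0 := by intro h; nlinarith
  -- trivial case: g not bounded above
  by_cases hbdd : IsBoundedUnder (· ≤ ·) atTop g
  swap
  · have hz : Filter.limsup g atTop = 0 := by
      rw [Filter.limsup_eq]
      convert Real.sInf_empty using 2
      · rfl
      rw [eq_empty_iff_forall_notMem]
      intro a ha
      exact hbdd ⟨a, ha⟩
    rw [hz, Real.zero_rpow (one_div_ne_zero h1p)]
    exact ENNReal.toReal_nonneg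
  -- main case
  set q : ℝ := p / (p - 1) with hqdef
  have hpq : p.HolderConjugate q := Real.HolderConjugate.conjExponent hp
  have hq0 : (0:ℝ) < q := hpq.symm.pos
  set L : ℝ := Filter.limsup g atTop with hLdef
  -- basic facts
  have hSnonneg : ∀ n, 0 ≤ S n :=
    fun n => Finset.sum_nonneg fun i _ => ENNReal.toReal_nonneg
  have hSpos : ∀ n, 1 ≤ n → 0 < S n := by
    intro n hn
    have : (μ (A 0)).toReal ≤ S n := by
      refine Finset.single_le_sum (f := fun k => (μ (A k)).toReal)
        (fun i _ => ENNReal.toReal_nonneg) (Finset.mem_range.2 hn)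
    have h0 : 0 < (μ (A 0)).toReal :=
      ENNReal.toReal_pos (hpos 0).ne' (measure_ne_top μ _)
    linarith
  have hFnonneg : ∀ n ω, 0 ≤ F n ω := by
    intro n ω
    exact Finset.sum_nonneg fun i _ => Set.indicator_nonneg (fun _ _ => zero_le_one) ω
  have hFle : ∀ n ω, F n ω ≤ n := by
    intro n ω
    calc F n ω ≤ ∑ i ∈ Finset.range n, (1:ℝ) := by
          refine Finset.sum_le_sum fun i _ => ?_
          exact Set.indicator_le_self' (fun _ _ => zero_le_one) ω |>.trans (by
            by_cases h : ω ∈ A i <;> simp [h])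
      _ = n := by simp
  have hfnonneg : ∀ n ω, 0 ≤ f n ω := fun n ω => div_nonneg (hFnonneg n ω) (hSnonneg n)
  have hfmeas : ∀ n, Measurable (f n) := by
    intro n
    apply Measurable.div_const
    exact Finset.measurable_sum _ fun i _ => measurable_const.indicator (hA i)
  have hfbound : ∀ n ω, f n ω ≤ (n:ℝ) / S n := by
    intro n ω
    rcases Nat.eq_zero_or_pos n with h | h
    · simp [hfdef, hFdef, h]
    · exact (div_le_div_iff_of_pos_right (hSpos n h)).mpr (hFle n ω)
  have hfint : ∀ n, Integrable (f n) μ := by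
    intro n
    refine (integrable_const ((n:ℝ) / S n)).mono' (hfmeas n).aestronglyMeasurable ?_
    exact Filter.Eventually.of_forall fun ω => by
      rw [Real.norm_of_nonneg (hfnonneg n ω)]; exact hfbound n ω
  have hintf : ∀ n, 1 ≤ n → ∫ ω, f n ω ∂μ = 1 := by
    intro n hn
    have : ∫ ω, F n ω ∂μ = S n := by
      show ∫ ω, (∑ i ∈ Finset.range n, (A i).indicator (1:Ω→ℝ) ω) ∂μ = S n
      rw [integral_finset_sum (Finset.range n) (f := fun i ω => (A i).indicator (1:Ω→ℝ) ω)
        (fun i _ => ((integrable_const (1:ℝ)).indicator (hA i) : _))]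
      exact Finset.sum_congr rfl fun i _ => integral_indicator_one (hA i)
    simp only [hfdef, integral_div, this]
    exact div_self (hSpos n hn).ne'
  have hgnonneg : ∀ n, 0 ≤ g n := by
    intro n
    exact integral_nonneg fun ω => Real.rpow_nonneg (hfnonneg n ω) p
  have hL0 : 0 ≤ L := by
    refine le_limsup_of_frequently_le ?_ hbdd
    exact Filter.Frequently.of_forall fun n => hgnonneg n
  -- per-N bound
  have key : ∀ N : ℕ, L ^ (1 / (1 - p)) ≤ (μ (⋃ i, ⋃ _ : N ≤ i, A i)).toReal := by
    intro N
    set B : Set Ω := ⋃ i, ⋃ _ : N ≤ i, A i with hBdef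
    have hBmeas : MeasurableSet B := MeasurableSet.iUnion fun i => MeasurableSet.iUnion fun _ => hA i
    set c : ℝ := (μ B).toReal ^ (1 / q) with hcdef
    have hc0 : 0 ≤ c := Real.rpow_nonneg ENNReal.toReal_nonneg _
    -- Hölder
    have hBind_meas : Measurable (B.indicator (1 : Ω → ℝ)) := measurable_const.indicator hBmeas
    have hBq : ∫ ω, (B.indicator (fun _ => (1:ℝ)) ω) ^ q ∂μ = (μ B).toReal := by
      have : ∀ ω, (B.indicator (fun _ => (1:ℝ)) ω) ^ q = B.indicator (fun _ => (1:ℝ)) ω := by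
        intro ω
        by_cases h : ω ∈ B <;>
          simp [h, Real.one_rpow, Real.zero_rpow hq0.ne']
      rw [integral_congr_ae (Filter.Eventually.of_forall this)]
      exact integral_indicator_one hBmeas
    have holder : ∀ n, ∫ ω, f n ω * B.indicator 1 ω ∂μ ≤ (g n) ^ (1/p) * c := by
      intro n
      have hmemf : MemLp (f n) (ENNReal.ofReal p) μ := by
        refine MemLp.mono_exponent ?_ le_top
        refine memLp_top_of_bound (hfmeas n).aestronglyMeasurable ((n:ℝ) / S n) ?_
        exact Filter.Eventually.of_forall fun ω => by
          rw [Real.norm_of_nonneg (hfnonneg n ω)]; exact hfbound n ω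
      have hmemB : MemLp (B.indicator (1 : Ω → ℝ)) (ENNReal.ofReal q) μ := by
        refine MemLp.mono_exponent ?_ le_top
        refine memLp_top_of_bound hBind_meas.aestronglyMeasurable 1 ?_
        refine Filter.Eventually.of_forall fun ω => ?_
        by_cases h : ω ∈ B <;> simp [h]
      have h := integral_mul_le_Lp_mul_Lq_of_nonneg hpq
        (Filter.Eventually.of_forall (hfnonneg n))
        (Filter.Eventually.of_forall fun ω =>
          Set.indicator_nonneg (fun _ _ => zero_le_one) ω)
        hmemf hmemB
      calc ∫ ω, f n ω * B.indicator 1 ω ∂μ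
          ≤ (∫ a, f n a ^ p ∂μ) ^ (1/p) *
            (∫ a, (B.indicator (fun _ => (1:ℝ)) a) ^ q ∂μ) ^ (1/q) := h
        _ = (g n) ^ (1/p) * c := by rw [hBq]
    -- lower bound on the truncated integral
    have lower : ∀ n, 1 ≤ n → 1 - (N:ℝ) / S n ≤ ∫ ω, f n ω * B.indicator 1 ω ∂μ := by
      intro n hn
      have hSn := hSpos n hn
      have hFN : ∀ ω, ω ∉ B → F n ω ≤ (N:ℝ) := by
        intro ω hω
        have hnotin : ∀ i, N ≤ i → ω ∉ A i := by
          intro i hi hmem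
          exact hω (Set.mem_iUnion₂.2 ⟨i, hi, hmem⟩)
        calc F n ω ≤ ∑ i ∈ Finset.range n, (if i < N then (1:ℝ) else 0) := by
              refine Finset.sum_le_sum fun i _ => ?_
              by_cases h : i < N
              · simp only [h, if_true]
                by_cases h' : ω ∈ A i <;> simp [h']
              · have : ω ∉ A i := hnotin i (not_lt.1 h)
                simp [h, this]
          _ = (((Finset.range n).filter (· < N)).card : ℝ) := by
              rw [← Finset.sum_filter]; simp
          _ ≤ (N:ℝ) := by
              have : ((Finset.range n).filter (· < N)) ⊆ Finset.range N := by
                intro i hi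
                simp only [Finset.mem_filter] at hi
                exact Finset.mem_range.2 hi.2
              have := Finset.card_le_card this
              exact_mod_cast this.trans_eq (Finset.card_range N)
      have hintc : Integrable (fun ω => f n ω * Bᶜ.indicator 1 ω) μ := by
        refine (integrable_const ((n:ℝ) / S n)).mono'
          ((hfmeas n).mul (measurable_const.indicator hBmeas.compl)).aestronglyMeasurable ?_
        refine Filter.Eventually.of_forall fun ω => ?_
        by_cases h : ω ∈ Bᶜ
        · rw [Set.indicator_of_mem h, Pi.one_apply, mul_one,
            Real.norm_of_nonneg (hfnonneg n ω)]
          exact hfbound n ω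
        · rw [Set.indicator_of_notMem h, mul_zero, norm_zero]
          positivity
      have hsplit : ∀ ω, f n ω * B.indicator 1 ω = f n ω - f n ω * Bᶜ.indicator 1 ω := by
        intro ω
        by_cases h : ω ∈ B
        · simp [Set.indicator_of_mem h, Set.indicator_of_notMem (by simpa using h :
            ω ∉ Bᶜ)]
        · simp [Set.indicator_of_notMem h, Set.indicator_of_mem (Set.mem_compl h)]
      have hle : ∫ ω, f n ω * Bᶜ.indicator 1 ω ∂μ ≤ (N:ℝ) / S n := by
        have : ∫ ω, ((N:ℝ) / S n) ∂μ = (N:ℝ) / S n := by simp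
        rw [← this]
        refine integral_mono hintc (integrable_const _) fun ω => ?_
        by_cases h : ω ∈ Bᶜ
        · rw [Set.indicator_of_mem h, Pi.one_apply, mul_one]
          exact (div_le_div_iff_of_pos_right hSn).mpr (hFN ω h)
        · rw [Set.indicator_of_notMem h, mul_zero]
          positivity
      calc 1 - (N:ℝ) / S n ≤ 1 - ∫ ω, f n ω * Bᶜ.indicator 1 ω ∂μ := by linarith
        _ = ∫ ω, f n ω ∂μ - ∫ ω, f n ω * Bᶜ.indicator 1 ω ∂μ := by rw [hintf n hn]
        _ = ∫ ω, (f n ω - f n ω * Bᶜ.indicator 1 ω) ∂μ := (integral_sub (hfint n) hintc).symm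
        _ = ∫ ω, f n ω * B.indicator 1 ω ∂μ :=
            integral_congr_ae (Filter.Eventually.of_forall fun ω => (hsplit ω).symm)
    -- combine
    have one_le : 1 ≤ L ^ (1/p) * c := by
      have key2 : ∀ δ : ℝ, 0 < δ → ∀ ε : ℝ, 0 < ε → 1 - ε ≤ (L + δ) ^ (1/p) * c := by
        intro δ hδ ε hε
        have hev1 : ∀ᶠ n in atTop, g n < L + δ :=
          eventually_lt_of_limsup_lt (by linarith) hbdd
        have hev2 : ∀ᶠ n in atTop, max ((N:ℝ)/ε) 1 ≤ S n := hdiv.eventually_ge_atTop _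
        have hev3 : ∀ᶠ n : ℕ in atTop, 1 ≤ n := eventually_ge_atTop 1
        obtain ⟨n, h1, h2, h3⟩ := (hev1.and (hev2.and hev3)).exists
        have hSn : 0 < S n := lt_of_lt_of_le one_pos (le_trans (le_max_right _ _) h2)
        have hNS : (N:ℝ) / S n ≤ ε := by
          rw [div_le_iff₀ hSn]
          have h4 : (N:ℝ)/ε ≤ S n := le_trans (le_max_left _ _) h2
          calc (N:ℝ) = ((N:ℝ)/ε) * ε := by field_simp
            _ ≤ S n * ε := by gcongr
            _ = ε * S n := mul_comm _ _
        calc 1 - ε ≤ 1 - (N:ℝ)/S n := by linarith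
          _ ≤ ∫ ω, f n ω * B.indicator 1 ω ∂μ := lower n h3
          _ ≤ (g n) ^ (1/p) * c := holder n
          _ ≤ (L + δ) ^ (1/p) * c := by
              refine mul_le_mul_of_nonneg_right ?_ hc0
              exact Real.rpow_le_rpow (hgnonneg n) h1.le (by positivity)
      have step : ∀ δ : ℝ, 0 < δ → 1 ≤ (L + δ) ^ (1/p) * c := by
        intro δ hδ
        refine le_of_forall_pos_le_add fun ε hε => ?_
        linarith [key2 δ hδ ε hε]
      have hcont : Tendsto (fun δ : ℝ => (L + δ) ^ (1/p) * c) (𝓝[>] 0)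
          (𝓝 (L ^ (1/p) * c)) := by
        have h1 : Tendsto (fun δ : ℝ => L + δ) (𝓝[>] (0:ℝ)) (𝓝 L) := by
          have h0 : Tendsto (fun δ : ℝ => L + δ) (𝓝 (0:ℝ)) (𝓝 (L + 0)) :=
            (continuous_const.add continuous_id).tendsto 0
          rw [add_zero] at h0
          exact h0.mono_left nhdsWithin_le_nhds
        have h2 : ContinuousAt (fun x : ℝ => x ^ (1/p)) L :=
          Real.continuousAt_rpow_const L (1/p) (Or.inr (by positivity))
        exact (h2.tendsto.comp h1).mul tendsto_const_nhds
      exact ge_of_tendsto hcont (eventually_nhdsWithin_of_forall fun δ hδ => step δ hδ)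
    -- conclude
    have hLpos : 0 < L := by
      rcases hL0.lt_or_eq with h | h
      · exact h
      · exfalso
        rw [← h, Real.zero_rpow (one_div_ne_zero hp0.ne'), zero_mul] at one_le
        linarith
    have ha : 0 < L ^ (1/p) := Real.rpow_pos_of_pos hLpos _
    have hc : L ^ (-(1/p)) ≤ c := by
      rw [Real.rpow_neg hL0, inv_eq_one_div, div_le_iff₀ ha, mul_comm]
      exact one_le
    have hpow := Real.rpow_le_rpow (Real.rpow_nonneg hL0 _) hc hq0.le
    have hlhs : (L ^ (-(1/p))) ^ q = L ^ (1 / (1 - p)) := by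
      rw [← Real.rpow_mul hL0]
      congr 1
      have h2 : p - 1 ≠ 0 := sub_ne_zero.mpr (ne_of_gt hp)
      rw [hqdef]
      field_simp
      ring
    have hrhs : c ^ q = (μ B).toReal := by
      rw [hcdef, ← Real.rpow_mul ENNReal.toReal_nonneg,
        one_div_mul_cancel hq0.ne', Real.rpow_one]
    rw [hlhs, hrhs] at hpow
    exact hpow
  -- pass to the limit in N
  have hanti : Antitone (fun N : ℕ => ⋃ i, ⋃ _ : N ≤ i, A i) := by
    intro N M h
    exact Set.iUnion₂_subset fun i hi =>
      Set.subset_iUnion₂ (s := fun i (_ : N ≤ i) => A i) i (h.trans hi)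
  have hlim : Tendsto (fun N => μ (⋃ i, ⋃ _ : N ≤ i, A i)) atTop
      (𝓝 (μ (⋂ N, ⋃ i, ⋃ _ : N ≤ i, A i))) := by
    refine tendsto_measure_iInter_atTop
      (fun N => (MeasurableSet.iUnion fun i => MeasurableSet.iUnion fun _ => hA i).nullMeasurableSet)
      hanti ⟨0, measure_ne_top μ _⟩
  have hlimsup_eq : Filter.limsup A atTop = ⋂ N, ⋃ i, ⋃ _ : N ≤ i, A i := by
    rw [limsup_eq_iInf_iSup_of_nat]
    simp only [Set.iInf_eq_iInter, Set.iSup_eq_iUnion, ge_iff_le]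
  rw [ge_iff_le, hlimsup_eq]
  have htoReal : Tendsto (fun N => (μ (⋃ i, ⋃ _ : N ≤ i, A i)).toReal) atTop
      (𝓝 ((μ (⋂ N, ⋃ i, ⋃ _ : N ≤ i, A i)).toReal)) :=
    (ENNReal.tendsto_toReal (measure_ne_top μ _)).comp hlim
  exact ge_of_tendsto htoReal (Filter.Eventually.of_forall key)
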